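/- Let d ≥ 3 with d ≠ 5. Then the integral ∫₀^{π/2} cos(2T) h_d(cos T) dT is nonzero, where h_d(y) = ∫_{−1}^1 |y+x|^{(5−d)/(d−2)}(1−x²)^{(d+2)/2} dx; it is positive if d ∈ {3,4} and negative if d ≥ 6. -/

import Mathlib

set_option maxHeartbeats 1000000


open Real intervalIntegral
open MeasureTheory Set


noncomputable def ww (β x : ℝ) : ℝ := (1 - x ^ 2) ^ β
noncomputable def gg (r y1 y2 x : ℝ) : ℝ := |y2 + x| ^ r - |y1 + x| ^ r

lemma ww_nonneg {β : ℝ} {x : ℝ} (hx : |x| ≤ 1) : 0 ≤ ww β x := by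
  have h := abs_le.mp hx
  have : (0:ℝ) ≤ 1 - x ^ 2 := by nlinarith [h.1, h.2]
  exact Real.rpow_nonneg this β

lemma ww_mono {β : ℝ} (hβ : 0 < β) {t u : ℝ} (h : |t| ≤ |u|) (hu : |u| ≤ 1) :
    ww β u ≤ ww β t := by
  have hu' := abs_le.mp hu
  have h1 : (0:ℝ) ≤ 1 - u ^ 2 := by nlinarith [hu'.1, hu'.2]
  have h2 : 1 - u ^ 2 ≤ 1 - t ^ 2 := by
    have ht := sq_le_sq' (neg_le_of_abs_le h) (le_of_abs_le h)
    rw [sq_abs] at ht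
    linarith
  exact Real.rpow_le_rpow h1 h2 hβ.le

lemma ww_pos {β : ℝ} {x : ℝ} (hx : |x| < 1) : 0 < ww β x := by
  have h := abs_lt.mp hx
  have : (0:ℝ) < 1 - x ^ 2 := by nlinarith [h.1, h.2]
  exact Real.rpow_pos_of_pos this β

lemma gg_reflect (r y1 y2 x : ℝ) : gg r y1 y2 (-(y1 + y2) - x) = -gg r y1 y2 x := by
  have e1 : y2 + (-(y1 + y2) - x) = -(y1 + x) := by ring
  have e2 : y1 + (-(y1 + y2) - x) = -(y2 + x) := by ring
  rw [gg, gg, e1, e2, abs_neg, abs_neg]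
  ring

lemma abs_le_abs_of_sq {a b : ℝ} (h : a ^ 2 ≤ b ^ 2) : |a| ≤ |b| := by
  rw [← Real.sqrt_sq_eq_abs, ← Real.sqrt_sq_eq_abs]
  exact Real.sqrt_le_sqrt h

lemma myIntervalIntegrable_abs_rpow {r : ℝ} (hr : -1 < r) (a b : ℝ) :
    IntervalIntegrable (fun x : ℝ => |x| ^ r) volume a b := by
  have key : ∀ c : ℝ, IntervalIntegrable (fun x : ℝ => |x| ^ r) volume 0 c := by
    intro c
    rcases le_or_gt 0 c with hc | hc
    · rw [intervalIntegrable_iff, uIoc_of_le hc]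
      exact ((intervalIntegrable_rpow' hr (a := 0) (b := c)).1).congr_fun
        (fun x hx => by rw [abs_of_pos hx.1]) measurableSet_Ioc
    · have h2 : IntervalIntegrable (fun x : ℝ => (0 - x) ^ r) volume (0 - (-c)) (0 - 0) :=
        (intervalIntegrable_rpow' hr (a := -c) (b := 0)).comp_sub_left 0
      rw [intervalIntegrable_iff, uIoc_of_ge hc.le]
      have h3 : IntegrableOn (fun x : ℝ => (0 - x) ^ r) (Ioc c 0) volume := by
        rw [intervalIntegrable_iff] at h2
        simpa [uIoc_of_le hc.le] using h2
      exact h3.congr_fun (fun x hx => by beta_reduce; rw [zero_sub, ← abs_of_nonpos hx.2]) measurableSet_Ioc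
  exact (key a).symm.trans (key b)

lemma myIntervalIntegrable_abs_add_rpow {r : ℝ} (hr : -1 < r) (y a b : ℝ) :
    IntervalIntegrable (fun x : ℝ => |y + x| ^ r) volume a b := by
  have := (myIntervalIntegrable_abs_rpow hr (a + y) (b + y)).comp_add_left y
  simpa using this

lemma continuous_w {β : ℝ} (hβ : 0 < β) : Continuous (fun x : ℝ => (1 - x ^ 2) ^ β) := by
  apply continuous_iff_continuousAt.mpr
  intro x
  exact (Real.continuousAt_rpow_const _ _ (Or.inr hβ.le)).comp (by fun_prop)

lemma integrable_kernel {r β : ℝ} (hr : -1 < r) (hβ : 0 < β) (y a b : ℝ) :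
    IntervalIntegrable (fun x : ℝ => |y + x| ^ r * (1 - x ^ 2) ^ β) volume a b :=
  (myIntervalIntegrable_abs_add_rpow hr y a b).mul_continuousOn ((continuous_w hβ).continuousOn)

lemma key_mono {r β y1 y2 : ℝ} (hr1 : -1 < r) (hβ : 0 < β)
    (h0 : 0 ≤ y1) (h12 : y1 < y2) (h21 : y2 ≤ 1) :
    (0 < r → (∫ x in (-1:ℝ)..1, |y1 + x| ^ r * (1 - x ^ 2) ^ β) <
             (∫ x in (-1:ℝ)..1, |y2 + x| ^ r * (1 - x ^ 2) ^ β)) ∧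
    (r < 0 → (∫ x in (-1:ℝ)..1, |y2 + x| ^ r * (1 - x ^ 2) ^ β) <
             (∫ x in (-1:ℝ)..1, |y1 + x| ^ r * (1 - x ^ 2) ^ β)) := by
  have hy2 : 0 < y2 := lt_of_le_of_lt h0 h12
  set s : ℝ := -(y1 + y2) with hs
  have hs0 : s < 0 := by rw [hs]; linarith
  have hs2 : -2 < s := by rw [hs]; linarith
  set g : ℝ → ℝ := gg r y1 y2 with hgdef
  set w : ℝ → ℝ := ww β with hwdef
  have hgx : ∀ x, g x = |y2 + x| ^ r - |y1 + x| ^ r := fun x => rfl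
  have hwx : ∀ x, w x = (1 - x ^ 2) ^ β := fun x => rfl
  have hI1 : IntervalIntegrable (fun x => |y1 + x| ^ r * (1 - x ^ 2) ^ β) volume (-1) 1 :=
    integrable_kernel hr1 hβ y1 (-1) 1
  have hI2 : IntervalIntegrable (fun x => |y2 + x| ^ r * (1 - x ^ 2) ^ β) volume (-1) 1 :=
    integrable_kernel hr1 hβ y2 (-1) 1
  have hfe : (fun x => g x * w x)
      = fun x => |y2 + x| ^ r * (1 - x ^ 2) ^ β - |y1 + x| ^ r * (1 - x ^ 2) ^ β := by
    funext x; rw [hgx, hwx]; ring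
  have hgw : IntervalIntegrable (fun x => g x * w x) volume (-1) 1 := by
    rw [hfe]; exact hI2.sub hI1
  have hD : (∫ x in (-1:ℝ)..1, |y2 + x| ^ r * (1 - x ^ 2) ^ β)
      - (∫ x in (-1:ℝ)..1, |y1 + x| ^ r * (1 - x ^ 2) ^ β)
      = ∫ x in (-1:ℝ)..1, g x * w x := by
    rw [hfe]; exact (intervalIntegral.integral_sub hI2 hI1).symm
  have hgref : ∀ x, g (s - x) = -g x := by
    intro x
    exact gg_reflect r y1 y2 x
  -- reflection identity
  have hrefl : (∫ x in (-1:ℝ)..1, g x * w x)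
      = -∫ x in (s-1)..(s+1), g x * w (s - x) := by
    have hfe2 : (fun x : ℝ => g x * w x)
        = fun x => (fun u => -(g u * w (s - u))) (s - x) := by
      funext x
      dsimp only
      have h2 : s - (s - x) = x := by ring
      rw [hgref, h2]
      ring
    rw [hfe2, intervalIntegral.integral_comp_sub_left (fun u => -(g u * w (s - u))) s]
    rw [intervalIntegral.integral_neg]
    norm_num
  have hgw2 : IntervalIntegrable (fun x => g x * w (s - x)) volume (s-1) (s+1) := by
    have h := (hgw.neg.comp_sub_left s).symm
    have e2 : s - -1 = s + 1 := by ring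
    rw [e2] at h
    have hfe3 : (fun x : ℝ => g x * w (s - x)) = (fun x : ℝ => (-fun y => g y * w y) (s - x)) := by
      funext x
      have hgr := hgref x
      simp only [Pi.neg_apply]
      rw [hgr]
      ring
    rw [hfe3]
    exact h
  set F1 : ℝ → ℝ := (Ioc (-1:ℝ) 1).indicator (fun x => g x * w x) with hF1def
  set F2 : ℝ → ℝ := (Ioc (s-1) (s+1)).indicator (fun x => g x * w (s - x)) with hF2def
  have hF1int : Integrable F1 volume := (hgw.1).integrable_indicator measurableSet_Ioc
  have hF2int : Integrable F2 volume := (hgw2.1).integrable_indicator measurableSet_Ioc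
  have hE1 : (∫ x in (-1:ℝ)..1, g x * w x) = ∫ x, F1 x := by
    rw [integral_of_le (by norm_num : (-1:ℝ) ≤ 1)]
    exact (MeasureTheory.integral_indicator measurableSet_Ioc).symm
  have hE2 : (∫ x in (s-1)..(s+1), g x * w (s - x)) = ∫ x, F2 x := by
    rw [integral_of_le (by linarith : s - 1 ≤ s + 1)]
    exact (MeasureTheory.integral_indicator measurableSet_Ioc).symm
  have h2D : 2 * ((∫ x in (-1:ℝ)..1, |y2 + x| ^ r * (1 - x ^ 2) ^ β)
      - (∫ x in (-1:ℝ)..1, |y1 + x| ^ r * (1 - x ^ 2) ^ β)) = ∫ x, (F1 x - F2 x) := by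
    rw [integral_sub hF1int hF2int, ← hE1, ← hE2]
    linarith [hD, hrefl]
  -- pointwise indicator formulas
  set W : ℝ → ℝ := (Ioc (-1:ℝ) 1).indicator w with hWdef
  set W' : ℝ → ℝ := (Ioc (s-1) (s+1)).indicator (fun t => w (s - t)) with hW'def
  have hF1x : ∀ x, F1 x = g x * W x := by
    intro x
    by_cases h : x ∈ Ioc (-1:ℝ) 1 <;>
      simp [hF1def, hWdef, indicator_of_mem, indicator_of_notMem, h]
  have hF2x : ∀ x, F2 x = g x * W' x := by
    intro x
    by_cases h : x ∈ Ioc (s-1) (s+1) <;>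
      simp [hF2def, hW'def, indicator_of_mem, indicator_of_notMem, h]
  have hWnn : ∀ x, 0 ≤ W x := by
    intro x
    apply indicator_nonneg
    intro t ht
    exact ww_nonneg (abs_le.mpr ⟨by linarith [ht.1], ht.2⟩)
  have hW'nn : ∀ x, 0 ≤ W' x := by
    intro x
    apply indicator_nonneg
    intro t ht
    exact ww_nonneg (abs_le.mpr ⟨by linarith [ht.2], by linarith [ht.1]⟩)
  -- comparison of weights
  have hWge : ∀ x, s/2 ≤ x → W' x ≤ W x := by
    intro x hx
    by_cases hm : x ∈ Ioc (s-1) (s+1)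
    · rw [hW'def, indicator_of_mem hm]
      have h1 : |s - x| ≤ 1 := abs_le.mpr ⟨by linarith [hm.2], by linarith [hm.1]⟩
      have h2 : |x| ≤ |s - x| := by
        apply abs_le_abs_of_sq
        nlinarith [mul_nonneg (by linarith : (0:ℝ) ≤ -s) (by linarith : (0:ℝ) ≤ 2*x - s)]
      have hx1 : |x| ≤ 1 := h2.trans h1
      have hxm : x ∈ Ioc (-1:ℝ) 1 := ⟨by linarith [(abs_le.mp hx1).1, hs2], (abs_le.mp hx1).2⟩
      rw [hWdef, indicator_of_mem hxm]
      exact ww_mono hβ h2 h1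
    · rw [hW'def, indicator_of_notMem hm]
      exact hWnn x
  have hWle : ∀ x, x ≤ s/2 → W x ≤ W' x := by
    intro x hx
    by_cases hm : x ∈ Ioc (-1:ℝ) 1
    · rw [hWdef, indicator_of_mem hm]
      have h1 : |x| ≤ 1 := abs_le.mpr ⟨hm.1.le, hm.2⟩
      have h2 : |s - x| ≤ |x| := by
        apply abs_le_abs_of_sq
        nlinarith [mul_nonneg (by linarith : (0:ℝ) ≤ -s) (by linarith : (0:ℝ) ≤ s - 2*x)]
      have h3 : |s - x| ≤ 1 := h2.trans h1
      have hxm : x ∈ Ioc (s-1) (s+1) := by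
        have := abs_le.mp h3
        exact ⟨by linarith [hm.1], by linarith [this.1]⟩
      rw [hW'def, indicator_of_mem hxm]
      exact ww_mono hβ h2 h1
    · rw [hWdef, indicator_of_notMem hm]
      exact hW'nn x
  -- abs comparisons for g
  have habs1 : ∀ x, s/2 ≤ x → |y1 + x| ≤ |y2 + x| := by
    intro x hx
    apply abs_le_abs_of_sq
    nlinarith [mul_nonneg (by linarith : (0:ℝ) ≤ y2 - y1) (by linarith : (0:ℝ) ≤ y1 + y2 + 2*x)]
  have habs2 : ∀ x, x ≤ s/2 → |y2 + x| ≤ |y1 + x| := by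
    intro x hx
    apply abs_le_abs_of_sq
    nlinarith [mul_nonneg (by linarith : (0:ℝ) ≤ y2 - y1) (by linarith : (0:ℝ) ≤ -(y1 + y2 + 2*x))]
  -- pointwise sign, positive exponent
  have hsign_pos : 0 < r → ∀ x, 0 ≤ F1 x - F2 x := by
    intro hr x
    rw [hF1x, hF2x]
    have e : g x * W x - g x * W' x = g x * (W x - W' x) := by ring
    rw [e]
    rcases le_total x (s/2) with hx | hx
    · have hg : g x ≤ 0 := by
        rw [hgx]
        have := Real.rpow_le_rpow (abs_nonneg _) (habs2 x hx) hr.le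
        linarith
      have hW : W x - W' x ≤ 0 := by linarith [hWle x hx]
      nlinarith [mul_nonneg (neg_nonneg.mpr hg) (neg_nonneg.mpr hW)]
    · have hg : 0 ≤ g x := by
        rw [hgx]
        have := Real.rpow_le_rpow (abs_nonneg _) (habs1 x hx) hr.le
        linarith
      have hW : 0 ≤ W x - W' x := by linarith [hWge x hx]
      exact mul_nonneg hg hW
  -- pointwise sign, negative exponent
  have hsign_neg : r < 0 → ∀ x, x ≠ -y1 → x ≠ -y2 → F1 x - F2 x ≤ 0 := by
    intro hr x hx1 hx2
    rw [hF1x, hF2x]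
    have e : g x * W x - g x * W' x = g x * (W x - W' x) := by ring
    rw [e]
    rcases le_total x (s/2) with hx | hx
    · have hpos : 0 < |y2 + x| := abs_pos.mpr (fun h => hx2 (by linarith))
      have hg : 0 ≤ g x := by
        rw [hgx]
        have := Real.rpow_le_rpow_of_nonpos hpos (habs2 x hx) hr.le
        linarith
      have hW : W x - W' x ≤ 0 := by linarith [hWle x hx]
      nlinarith [mul_nonneg hg (neg_nonneg.mpr hW)]
    · have hpos : 0 < |y1 + x| := abs_pos.mpr (fun h => hx1 (by linarith))
      have hg : g x ≤ 0 := by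
        rw [hgx]
        have := Real.rpow_le_rpow_of_nonpos hpos (habs1 x hx) hr.le
        linarith
      have hW : 0 ≤ W x - W' x := by linarith [hWge x hx]
      nlinarith [mul_nonneg (neg_nonneg.mpr hg) hW]
  -- the strict subinterval
  have ha0u : s + 1 < 1 := by linarith
  have ha0l : (-1:ℝ) < s + 1 := by linarith
  have hsub : IntervalIntegrable (fun x => g x * w x) volume (s+1) 1 := by
    apply hgw.mono_set
    rw [uIcc_of_le (by norm_num : (-1:ℝ) ≤ 1), uIcc_of_le ha0u.le]
    exact Icc_subset_Icc ha0l.le le_rfl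
  have hyx : ∀ x ∈ Ioo (s+1) 1, 0 < y1 + x ∧ y1 + x < y2 + x ∧ |x| < 1 := by
    intro x hx
    have hx1 : -(y1+y2) + 1 < x := hx.1
    have hx2 : x < 1 := hx.2
    exact ⟨by linarith, by linarith, abs_lt.mpr ⟨by linarith, hx2⟩⟩
  have hstrict_pos : 0 < r → 0 < ∫ x in (s+1)..1, g x * w x := by
    intro hr
    apply intervalIntegral_pos_of_pos_on hsub _ ha0u
    intro x hx
    obtain ⟨hp1, hp2, hp3⟩ := hyx x hx
    have hg : 0 < g x := by
      rw [hgx, abs_of_pos hp1, abs_of_pos (by linarith)]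
      have := Real.rpow_lt_rpow hp1.le hp2 hr
      linarith
    exact mul_pos hg (ww_pos hp3)
  have hstrict_neg : r < 0 → (∫ x in (s+1)..1, g x * w x) < 0 := by
    intro hr
    have hneg : 0 < ∫ x in (s+1)..1, -(g x * w x) := by
      apply intervalIntegral_pos_of_pos_on hsub.neg _ ha0u
      intro x hx
      simp only [Pi.neg_apply]
      obtain ⟨hp1, hp2, hp3⟩ := hyx x hx
      have hg : g x < 0 := by
        rw [hgx, abs_of_pos hp1, abs_of_pos (by linarith)]
        have := Real.rpow_lt_rpow_of_neg hp1 hp2 hr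
        linarith
      have hmul : g x * w x < 0 := mul_neg_of_neg_of_pos hg (ww_pos (β := β) hp3)
      linarith
    rw [intervalIntegral.integral_neg] at hneg
    linarith
  -- decomposition
  have hdecomp : (∫ x, (F1 x - F2 x))
      = (∫ x in Ioc (s+1) 1, (F1 x - F2 x)) + ∫ x in (Ioc (s+1) 1)ᶜ, (F1 x - F2 x) :=
    (integral_add_compl measurableSet_Ioc (hF1int.sub hF2int)).symm
  have hSeq : (∫ x in Ioc (s+1) 1, (F1 x - F2 x)) = ∫ x in (s+1)..1, g x * w x := by
    rw [integral_of_le ha0u.le]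
    apply setIntegral_congr_fun measurableSet_Ioc
    intro x hx
    have hm1 : x ∈ Ioc (-1:ℝ) 1 := ⟨by linarith [hx.1], hx.2⟩
    have hm2 : x ∉ Ioc (s-1) (s+1) := fun h => absurd h.2 (not_le.mpr hx.1)
    simp only [hF1def, hF2def, indicator_of_mem hm1, indicator_of_notMem hm2, sub_zero]
  constructor
  · intro hr
    have h8 : 0 ≤ ∫ x in (Ioc (s+1) 1)ᶜ, (F1 x - F2 x) :=
      setIntegral_nonneg_of_ae (Filter.Eventually.of_forall (hsign_pos hr))
    linarith [hstrict_pos hr, h2D, hdecomp, hSeq]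
  · intro hr
    have hae : ∀ᵐ x : ℝ ∂volume, F1 x - F2 x ≤ 0 := by
      have hm0 : volume ({-y1, -y2} : Set ℝ) = 0 :=
        (Set.Finite.insert _ (Set.finite_singleton _)).measure_zero _
      have h0 : ∀ᵐ x : ℝ ∂volume, x ∉ ({-y1, -y2} : Set ℝ) :=
        measure_eq_zero_iff_ae_notMem.mp hm0
      filter_upwards [h0] with x hx
      simp only [mem_insert_iff, mem_singleton_iff, not_or] at hx
      exact hsign_neg hr x hx.1 hx.2
    have h8 : (∫ x in (Ioc (s+1) 1)ᶜ, (F1 x - F2 x)) ≤ 0 :=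
      setIntegral_nonpos_of_ae hae
    linarith [hstrict_neg hr, h2D, hdecomp, hSeq]


lemma integral_cos_two_mul_zero : (∫ T in (0:ℝ)..(π/2), Real.cos (2*T)) = 0 := by
  have h := intervalIntegral.integral_comp_mul_left (f := fun x => Real.cos x)
    (a := (0:ℝ)) (b := π/2) (c := (2:ℝ)) two_ne_zero
  simp only [mul_zero] at h
  rw [h]
  have : (2:ℝ) * (π/2) = π := by ring
  rw [this, integral_cos, Real.sin_pi, Real.sin_zero]
  simp

lemma outer_pos {H : ℝ → ℝ} (hmono : StrictMonoOn H (Icc 0 1)) :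
    0 < ∫ T in (0:ℝ)..(π/2), Real.cos (2*T) * H (Real.cos T) := by
  have hpi := Real.pi_pos
  have hc0 : Real.cos (π/4) = Real.sqrt 2 / 2 := Real.cos_pi_div_four
  have hs2 : (0:ℝ) ≤ Real.sqrt 2 := Real.sqrt_nonneg 2
  have hs2' : Real.sqrt 2 ≤ 2 := by
    nlinarith [Real.sq_sqrt (by norm_num : (0:ℝ) ≤ 2)]
  have hc0m : Real.sqrt 2 / 2 ∈ Icc (0:ℝ) 1 := ⟨by linarith, by linarith⟩
  have hcosmem : ∀ T ∈ Icc (0:ℝ) (π/2), Real.cos T ∈ Icc (0:ℝ) 1 := by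
    intro T hT
    exact ⟨Real.cos_nonneg_of_mem_Icc ⟨by linarith [hT.1], hT.2⟩, Real.cos_le_one T⟩
  -- integrability
  have hK : AntitoneOn (fun T => H (Real.cos T)) (Icc 0 (π/2)) := by
    intro T1 h1 T2 h2 h12
    have hcc : Real.cos T2 ≤ Real.cos T1 := by
      apply Real.strictAntiOn_cos.antitoneOn ⟨h1.1, by linarith [h1.2]⟩ ⟨h2.1, by linarith [h2.2]⟩ h12
    exact hmono.monotoneOn (hcosmem T2 h2) (hcosmem T1 h1) hcc
  have hKi : IntervalIntegrable (fun T => H (Real.cos T)) volume 0 (π/2) := by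
    apply AntitoneOn.intervalIntegrable
    rwa [uIcc_of_le (by linarith)]
  have hcont : Continuous (fun T : ℝ => Real.cos (2*T)) :=
    Real.continuous_cos.comp (continuous_const.mul continuous_id)
  have hfi : IntervalIntegrable
      (fun T => Real.cos (2*T) * (H (Real.cos T) - H (Real.sqrt 2 / 2))) volume 0 (π/2) :=
    (hKi.sub (intervalIntegrable_const)).continuousOn_mul hcont.continuousOn
  -- subtracting the constant does not change the integral
  have htot : (∫ T in (0:ℝ)..(π/2), Real.cos (2*T) * H (Real.cos T))
      = ∫ T in (0:ℝ)..(π/2), Real.cos (2*T) * (H (Real.cos T) - H (Real.sqrt 2 / 2)) := by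
    have he : (fun T => Real.cos (2*T) * H (Real.cos T))
        = fun T => Real.cos (2*T) * (H (Real.cos T) - H (Real.sqrt 2 / 2))
            + Real.cos (2*T) * H (Real.sqrt 2 / 2) := by
      funext T; ring
    rw [he, intervalIntegral.integral_add hfi
      ((hcont.intervalIntegrable 0 (π/2)).mul_const _)]
    rw [intervalIntegral.integral_mul_const, integral_cos_two_mul_zero]
    ring
  rw [htot]
  have hsub1 : IntervalIntegrable
      (fun T => Real.cos (2*T) * (H (Real.cos T) - H (Real.sqrt 2 / 2))) volume 0 (π/4) := by
    apply hfi.mono_set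
    rw [uIcc_of_le (by linarith), uIcc_of_le (by linarith)]
    exact Icc_subset_Icc le_rfl (by linarith)
  have hsub2 : IntervalIntegrable
      (fun T => Real.cos (2*T) * (H (Real.cos T) - H (Real.sqrt 2 / 2))) volume (π/4) (π/2) := by
    apply hfi.mono_set
    rw [uIcc_of_le (by linarith), uIcc_of_le (by linarith)]
    exact Icc_subset_Icc (by linarith) le_rfl
  have hadd := intervalIntegral.integral_add_adjacent_intervals hsub1 hsub2
  have hp1 : 0 < ∫ T in (0:ℝ)..(π/4),
      Real.cos (2*T) * (H (Real.cos T) - H (Real.sqrt 2 / 2)) := by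
    apply intervalIntegral_pos_of_pos_on hsub1 _ (by linarith)
    intro T hT
    have hcos2 : 0 < Real.cos (2*T) :=
      Real.cos_pos_of_mem_Ioo ⟨by linarith [hT.1], by linarith [hT.2]⟩
    have hTmem : T ∈ Icc (0:ℝ) (π/2) := ⟨hT.1.le, by linarith [hT.2]⟩
    have hlt : Real.sqrt 2 / 2 < Real.cos T := by
      rw [← hc0]
      apply Real.strictAntiOn_cos _ _ hT.2
      · exact ⟨hT.1.le, by linarith [hT.2]⟩
      · exact ⟨by linarith, by linarith⟩
    have hH : H (Real.sqrt 2 / 2) < H (Real.cos T) := hmono hc0m (hcosmem T hTmem) hlt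
    exact mul_pos hcos2 (by linarith)
  have hp2 : 0 < ∫ T in (π/4)..(π/2),
      Real.cos (2*T) * (H (Real.cos T) - H (Real.sqrt 2 / 2)) := by
    apply intervalIntegral_pos_of_pos_on hsub2 _ (by linarith)
    intro T hT
    have hcos2 : Real.cos (2*T) < 0 :=
      Real.cos_neg_of_pi_div_two_lt_of_lt (by linarith [hT.1]) (by linarith [hT.2])
    have hTmem : T ∈ Icc (0:ℝ) (π/2) := ⟨by linarith [hT.1], hT.2.le⟩
    have hlt : Real.cos T < Real.sqrt 2 / 2 := by
      rw [← hc0]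
      apply Real.strictAntiOn_cos _ _ hT.1
      · exact ⟨by linarith, by linarith⟩
      · exact ⟨by linarith [hT.1], by linarith [hT.2]⟩
    have hH : H (Real.cos T) < H (Real.sqrt 2 / 2) := hmono (hcosmem T hTmem) hc0m hlt
    exact mul_pos_of_neg_of_neg hcos2 (by linarith)
  linarith

lemma outer_neg {H : ℝ → ℝ} (hanti : StrictAntiOn H (Icc 0 1)) :
    (∫ T in (0:ℝ)..(π/2), Real.cos (2*T) * H (Real.cos T)) < 0 := by
  have hm : StrictMonoOn (fun y => -H y) (Icc 0 1) :=
    fun a ha b hb hab => neg_lt_neg (hanti ha hb hab)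
  have h := outer_pos hm
  have he : (fun T => Real.cos (2*T) * (fun y => -H y) (Real.cos T))
      = fun T => -(Real.cos (2*T) * H (Real.cos T)) := by
    funext T; simp
  rw [he, intervalIntegral.integral_neg] at h
  linarith

/-- `h_d(y) = ∫_{−1}^1 |y+x|^{(5−d)/(d−2)} (1−x²)^{(d+2)/2} dx`. -/
noncomputable def hFun (d : ℕ) (y : ℝ) : ℝ :=
  ∫ x in (-1:ℝ)..1, |y + x| ^ ((5 - (d:ℝ)) / ((d:ℝ) - 2)) * (1 - x ^ 2) ^ (((d:ℝ) + 2) / 2)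

/-- For `d ≥ 3` with `d ≠ 5`, the integral `∫₀^{π/2} cos(2T) h_d(cos T) dT` is nonzero:
positive if `d ∈ {3,4}`, negative if `d ≥ 6`. -/
theorem integral_cos_hFun_ne_zero (d : ℕ) (hd : 3 ≤ d) (hd5 : d ≠ 5) :
    (∫ T in (0:ℝ)..(π / 2), Real.cos (2 * T) * hFun d (Real.cos T)) ≠ 0 ∧
    ((d = 3 ∨ d = 4) → 0 < ∫ T in (0:ℝ)..(π / 2), Real.cos (2 * T) * hFun d (Real.cos T)) ∧
    (6 ≤ d → (∫ T in (0:ℝ)..(π / 2), Real.cos (2 * T) * hFun d (Real.cos T)) < 0) := by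
  have hd3 : (3:ℝ) ≤ (d:ℝ) := by exact_mod_cast hd
  have hd2 : (0:ℝ) < (d:ℝ) - 2 := by linarith
  have hβ : 0 < ((d:ℝ) + 2) / 2 := by linarith
  have hr1 : -1 < (5 - (d:ℝ)) / ((d:ℝ) - 2) := by
    rw [lt_div_iff₀ hd2]; linarith
  have hmono : ∀ y1 ∈ Icc (0:ℝ) 1, ∀ y2 ∈ Icc (0:ℝ) 1, y1 < y2 →
      ((0 < (5 - (d:ℝ)) / ((d:ℝ) - 2) → hFun d y1 < hFun d y2) ∧
       ((5 - (d:ℝ)) / ((d:ℝ) - 2) < 0 → hFun d y2 < hFun d y1)) := by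
    intro y1 h1 y2 h2 h12
    have hk := key_mono (r := (5 - (d:ℝ)) / ((d:ℝ) - 2)) (β := ((d:ℝ) + 2) / 2)
      hr1 hβ h1.1 h12 h2.2
    constructor
    · intro hr
      have := hk.1 hr
      simpa [hFun] using this
    · intro hr
      have := hk.2 hr
      simpa [hFun] using this
  have hcase : d = 3 ∨ d = 4 ∨ 6 ≤ d := by omega
  rcases hcase with rfl | rfl | h6
  · have hr : 0 < (5 - ((3:ℕ):ℝ)) / (((3:ℕ):ℝ) - 2) := by norm_num
    have hsm : StrictMonoOn (hFun 3) (Icc (0:ℝ) 1) :=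
      fun y1 h1 y2 h2 h12 => (hmono y1 h1 y2 h2 h12).1 hr
    have hpos := outer_pos hsm
    exact ⟨ne_of_gt hpos, fun _ => hpos, fun h => absurd h (by norm_num)⟩
  · have hr : 0 < (5 - ((4:ℕ):ℝ)) / (((4:ℕ):ℝ) - 2) := by norm_num
    have hsm : StrictMonoOn (hFun 4) (Icc (0:ℝ) 1) :=
      fun y1 h1 y2 h2 h12 => (hmono y1 h1 y2 h2 h12).1 hr
    have hpos := outer_pos hsm
    exact ⟨ne_of_gt hpos, fun _ => hpos, fun h => absurd h (by norm_num)⟩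
  · have hd6 : (6:ℝ) ≤ (d:ℝ) := by exact_mod_cast h6
    have hr : (5 - (d:ℝ)) / ((d:ℝ) - 2) < 0 :=
      div_neg_of_neg_of_pos (by linarith) hd2
    have hsa : StrictAntiOn (hFun d) (Icc (0:ℝ) 1) :=
      fun y1 h1 y2 h2 h12 => (hmono y1 h1 y2 h2 h12).2 hr
    have hneg := outer_neg hsa
    exact ⟨ne_of_lt hneg, fun h => absurd h (by omega), fun _ => hneg⟩
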